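/- Let n ≥ 3. There exists a constant A = A(n) > 0 with the following property. Let C₁ > 0 and c₀ > 0, let σ be a Borel measure on ℝⁿ satisfying σ(B(x, t)) ≤ C₁ t^{n−1} for every x ∈ ℝⁿ and t > 0, let z ∈ ℝⁿ and r > 0 satisfy σ(B(z, r/2)) ≥ c₀ r^{n−1}, and let ω be a finite Borel measure on ℝⁿ. Then there exists a point q ∈ B(z, r/2) such that ∫ ‖x − q‖^{2−n} dω(x) ≤ A (C₁ / c₀) ω(ℝⁿ) r^{2−n}. -/

import Mathlib

open MeasureTheory Metric
open scoped ENNReal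

section aux

variable {E : Type*} [NormedAddCommGroup E] [MeasurableSpace E] [BorelSpace E]
set_option linter.unusedSectionVars false

/-- The kernel is jointly measurable. -/
lemma kernel_meas [SecondCountableTopology E] (c : ℝ) :
    Measurable (fun p : E × E => (ENNReal.ofReal ‖p.1 - p.2‖) ^ c) := by
  apply (ENNReal.continuous_rpow_const.comp
    (ENNReal.continuous_ofReal.comp ((continuous_fst.sub continuous_snd).norm))).measurable

/-- Growth measures give no mass to singletons. -/
lemma sigma_singleton (n : ℕ) (hn : 3 ≤ n) (C₁ : ℝ) (hC₁ : 0 < C₁) (σ : Measure E)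
    (hσ : ∀ (x : E) (t : ℝ), 0 < t → σ (ball x t) ≤ ENNReal.ofReal (C₁ * t ^ ((n : ℝ) - 1)))
    (x : E) : σ {x} = 0 := by
  have hn3 : (3:ℝ) ≤ n := by exact_mod_cast hn
  have hne : (0:ℝ) < (n:ℝ) - 1 := by linarith
  refine le_antisymm (ENNReal.le_of_forall_pos_le_add fun ε hε _ => ?_) zero_le
  have hε' : (0:ℝ) < ε := hε
  set t : ℝ := (ε / C₁) ^ (((n:ℝ) - 1)⁻¹) with ht
  have htpos : 0 < t := Real.rpow_pos_of_pos (div_pos hε' hC₁) _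
  have h1 : σ {x} ≤ σ (ball x t) := by
    apply measure_mono
    intro y hy
    simp only [Set.mem_singleton_iff] at hy
    simp [hy, mem_ball, htpos]
  refine (h1.trans (hσ x t htpos)).trans ?_
  have h2 : t ^ ((n:ℝ) - 1) = ε / C₁ := by
    rw [ht, ← Real.rpow_mul (le_of_lt (div_pos hε' hC₁)), inv_mul_cancel₀ (ne_of_gt hne),
      Real.rpow_one]
  rw [h2, mul_div_cancel₀ _ (ne_of_gt hC₁)]
  simp [ENNReal.ofReal_coe_nnreal]

/-- Covering of punctured ball by dyadic annuli. -/
lemma mem_annuli {x q : E} {s : ℝ} (hq : q ∈ ball x s) (hqx : q ≠ x) :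
    ∃ j : ℕ, q ∈ ball x (s / 2 ^ j) \ ball x (s / 2 ^ (j + 1)) := by
  set d := dist q x with hd
  have hd0 : 0 < d := dist_pos.2 hqx
  have hds : d < s := mem_ball.1 hq
  have hex : ∃ j : ℕ, s / 2 ^ (j + 1) ≤ d := by
    obtain ⟨m, hm⟩ := pow_unbounded_of_one_lt (s / d) (one_lt_two (α := ℝ))
    refine ⟨m, ?_⟩
    rw [div_le_iff₀ (by positivity)]
    rw [div_lt_iff₀ hd0] at hm
    calc s ≤ d * 2 ^ m := by linarith [hm]
    _ ≤ d * 2 ^ (m + 1) := by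
        apply mul_le_mul_of_nonneg_left _ hd0.le
        exact pow_le_pow_right₀ one_le_two (Nat.le_succ m)
  refine ⟨Nat.find hex, ?_, ?_⟩
  · rcases Nat.eq_zero_or_pos (Nat.find hex) with h0 | hpos
    · rw [h0]; simpa [mem_ball] using hds
    · obtain ⟨m, hm⟩ := Nat.exists_eq_succ_of_ne_zero hpos.ne'
      have := Nat.find_min hex (m := m) (by omega)
      push_neg at this
      rw [hm]
      simpa [mem_ball] using this
  · have h := Nat.find_spec hex
    simp only [Set.mem_setOf_eq, mem_ball, not_lt]
    exact h

end aux

section aux2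

variable {E : Type*} [NormedAddCommGroup E] [MeasurableSpace E] [BorelSpace E]
set_option linter.unusedSectionVars false

lemma kernel_far_bound {a t : ℝ} (ht : 0 < t) (hta : t ≤ a) {c : ℝ} (hc : c ≤ 0) :
    (ENNReal.ofReal a) ^ c ≤ ENNReal.ofReal (t ^ c) := by
  rw [← ENNReal.ofReal_rpow_of_pos ht]
  have h2 := ENNReal.inv_le_inv.2
    (ENNReal.rpow_le_rpow (ENNReal.ofReal_le_ofReal hta) (neg_nonneg.2 hc))
  rwa [← ENNReal.rpow_neg, ← ENNReal.rpow_neg, neg_neg] at h2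

/-- Inner estimate: the potential of a growth measure restricted to a set of controlled
measure is at most a constant times `C₁ * s`. -/
lemma inner_est [SecondCountableTopology E] (n : ℕ) (hn : 3 ≤ n) (C₁ : ℝ) (hC₁ : 0 < C₁)
    (σ : Measure E)
    (hσ : ∀ (x : E) (t : ℝ), 0 < t → σ (ball x t) ≤ ENNReal.ofReal (C₁ * t ^ ((n : ℝ) - 1)))
    (x : E) (s : ℝ) (hs : 0 < s) (B : Set E)
    (hB : σ B ≤ ENNReal.ofReal (C₁ * s ^ ((n : ℝ) - 1))) :
    ∫⁻ q in B, (ENNReal.ofReal ‖x - q‖) ^ ((2 : ℝ) - n) ∂σ ≤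
      ENNReal.ofReal (((2 : ℝ) ^ ((n : ℝ) - 2) * 2 + 1) * (C₁ * s)) := by
  have hn3 : (3:ℝ) ≤ n := by exact_mod_cast hn
  set c : ℝ := (2 : ℝ) - n with hcdef
  have hc : c ≤ 0 := by simp only [hcdef]; linarith
  set k : E → ℝ≥0∞ := fun q => (ENNReal.ofReal ‖x - q‖) ^ c with hk
  have hkm : Measurable k := by
    have : k = (fun p : E × E => (ENNReal.ofReal ‖p.1 - p.2‖) ^ c) ∘ (fun q => (x, q)) := rfl
    rw [this]
    exact (kernel_meas c).comp (measurable_const.prodMk measurable_id)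
  -- split into near and far parts
  have hT : MeasurableSet (ball x s) := measurableSet_ball
  have hsplit : ∫⁻ q in B, k q ∂σ =
      ∫⁻ q in ball x s, k q ∂(σ.restrict B) + ∫⁻ q in (ball x s)ᶜ, k q ∂(σ.restrict B) :=
    (lintegral_add_compl k hT).symm
  -- far part
  have hfar : ∫⁻ q in (ball x s)ᶜ, k q ∂(σ.restrict B) ≤ ENNReal.ofReal (C₁ * s) := by
    have h1 : ∫⁻ q in (ball x s)ᶜ, k q ∂(σ.restrict B) ≤
        ∫⁻ _ in (ball x s)ᶜ, ENNReal.ofReal (s ^ c) ∂(σ.restrict B) := by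
      refine setLIntegral_mono measurable_const fun q hq => ?_
      have hdist : s ≤ ‖x - q‖ := by
        have := mem_ball.not.1 hq
        rw [dist_comm] at this
        rw [← dist_eq_norm]
        linarith [not_lt.1 this]
      exact kernel_far_bound hs hdist hc
    refine h1.trans ?_
    rw [setLIntegral_const]
    have h2 : (σ.restrict B) (ball x s)ᶜ ≤ σ B := by
      rw [Measure.restrict_apply (measurableSet_ball.compl)]
      exact measure_mono Set.inter_subset_right
    calc ENNReal.ofReal (s ^ c) * (σ.restrict B) (ball x s)ᶜ
        ≤ ENNReal.ofReal (s ^ c) * ENNReal.ofReal (C₁ * s ^ ((n : ℝ) - 1)) :=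
          mul_le_mul_right (h2.trans hB) _
      _ = ENNReal.ofReal (s ^ c * (C₁ * s ^ ((n : ℝ) - 1))) :=
          (ENNReal.ofReal_mul (Real.rpow_nonneg hs.le _)).symm
      _ = ENNReal.ofReal (C₁ * s) := by
          congr 1
          rw [show s ^ c * (C₁ * s ^ ((n : ℝ) - 1)) = C₁ * (s ^ c * s ^ ((n : ℝ) - 1)) by ring,
            ← Real.rpow_add hs, show c + ((n : ℝ) - 1) = 1 by rw [hcdef]; ring, Real.rpow_one]
  -- near part
  have hnear : ∫⁻ q in ball x s, k q ∂(σ.restrict B) ≤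
      ENNReal.ofReal ((2 : ℝ) ^ ((n : ℝ) - 2) * 2 * (C₁ * s)) := by
    have hres : ∫⁻ q in ball x s, k q ∂(σ.restrict B) ≤ ∫⁻ q in ball x s, k q ∂σ := by
      rw [Measure.restrict_restrict hT]
      exact lintegral_mono' (Measure.restrict_mono Set.inter_subset_left le_rfl) le_rfl
    refine hres.trans ?_
    -- remove the singleton {x}
    have hsing : σ {x} = 0 := sigma_singleton n hn C₁ hC₁ σ hσ x
    have hsub : ball x s ⊆ (ball x s \ {x}) ∪ {x} := by
      intro q hq
      by_cases h : q = x
      · exact Set.mem_union_right _ (by simp [h])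
      · exact Set.mem_union_left _ ⟨hq, by simp [h]⟩
    have h1 : ∫⁻ q in ball x s, k q ∂σ ≤
        ∫⁻ q in ball x s \ {x}, k q ∂σ + ∫⁻ q in {x}, k q ∂σ :=
      (lintegral_mono_set hsub).trans (lintegral_union_le _ _ _)
    rw [setLIntegral_measure_zero _ _ hsing, add_zero] at h1
    refine h1.trans ?_
    -- cover by annuli
    have hcover : ball x s \ {x} ⊆ ⋃ j : ℕ, (ball x (s / 2 ^ j) \ ball x (s / 2 ^ (j + 1))) := by
      intro q hq
      obtain ⟨j, hj⟩ := mem_annuli hq.1 (by simpa using hq.2)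
      exact Set.mem_iUnion.2 ⟨j, hj⟩
    refine (lintegral_mono_set hcover).trans ((lintegral_iUnion_le _ _).trans ?_)
    -- bound each annulus term
    have hterm : ∀ j : ℕ,
        ∫⁻ q in ball x (s / 2 ^ j) \ ball x (s / 2 ^ (j + 1)), k q ∂σ ≤
          ENNReal.ofReal ((2 : ℝ) ^ ((n : ℝ) - 2) * (C₁ * s)) * (ENNReal.ofReal (1/2)) ^ j := by
      intro j
      have hpow : (0:ℝ) < 2 ^ j := by positivity
      have hpow' : (0:ℝ) < 2 ^ (j+1) := by positivity
      have hrad : (0:ℝ) < s / 2 ^ (j + 1) := by positivity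
      have h1 : ∫⁻ q in ball x (s / 2 ^ j) \ ball x (s / 2 ^ (j + 1)), k q ∂σ ≤
          ∫⁻ _ in ball x (s / 2 ^ j) \ ball x (s / 2 ^ (j + 1)),
            ENNReal.ofReal ((s / 2 ^ (j + 1)) ^ c) ∂σ := by
        refine setLIntegral_mono measurable_const fun q hq => ?_
        have hdist : s / 2 ^ (j + 1) ≤ ‖x - q‖ := by
          have := mem_ball.not.1 hq.2
          rw [dist_comm] at this
          rw [← dist_eq_norm]
          linarith [not_lt.1 this]
        exact kernel_far_bound hrad hdist hc
      refine h1.trans ?_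
      rw [setLIntegral_const]
      have h2 : σ (ball x (s / 2 ^ j) \ ball x (s / 2 ^ (j + 1))) ≤
          ENNReal.ofReal (C₁ * (s / 2 ^ j) ^ ((n : ℝ) - 1)) :=
        (measure_mono Set.diff_subset).trans (hσ x _ (by positivity))
      calc ENNReal.ofReal ((s / 2 ^ (j + 1)) ^ c) *
            σ (ball x (s / 2 ^ j) \ ball x (s / 2 ^ (j + 1)))
          ≤ ENNReal.ofReal ((s / 2 ^ (j + 1)) ^ c) *
            ENNReal.ofReal (C₁ * (s / 2 ^ j) ^ ((n : ℝ) - 1)) := mul_le_mul_right h2 _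
        _ = ENNReal.ofReal ((s / 2 ^ (j + 1)) ^ c * (C₁ * (s / 2 ^ j) ^ ((n : ℝ) - 1))) :=
            (ENNReal.ofReal_mul (Real.rpow_nonneg hrad.le _)).symm
        _ = ENNReal.ofReal ((2 : ℝ) ^ ((n : ℝ) - 2) * (C₁ * s) * (1/2) ^ j) := by
            congr 1
            have hu : (0:ℝ) < s / 2 ^ j := by positivity
            have e1 : s / 2 ^ (j + 1) = (s / 2 ^ j) / 2 := by
              rw [pow_succ]; ring
            have e2 : (s / 2 ^ j) ^ c * (s / 2 ^ j) ^ ((n:ℝ) - 1) = s / 2 ^ j := by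
              rw [← Real.rpow_add hu, show c + ((n:ℝ) - 1) = 1 by rw [hcdef]; ring,
                Real.rpow_one]
            have e3 : ((2:ℝ) ^ c)⁻¹ = 2 ^ ((n:ℝ) - 2) := by
              rw [← Real.rpow_neg (by norm_num : (0:ℝ) ≤ 2), show -c = (n:ℝ) - 2 by
                rw [hcdef]; ring]
            have e4 : s / 2 ^ j = s * (1/2) ^ j := by
              rw [one_div, inv_pow, div_eq_mul_inv]
            rw [e1, Real.div_rpow hu.le (by norm_num : (0:ℝ) ≤ 2), div_eq_mul_inv, e3]
            calc (s / 2 ^ j) ^ c * (2:ℝ) ^ ((n:ℝ) - 2) * (C₁ * (s / 2 ^ j) ^ ((n:ℝ) - 1))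
                = ((s / 2 ^ j) ^ c * (s / 2 ^ j) ^ ((n:ℝ) - 1)) * C₁ * 2 ^ ((n:ℝ) - 2) := by
                  ring
              _ = (s / 2 ^ j) * C₁ * 2 ^ ((n:ℝ) - 2) := by rw [e2]
              _ = 2 ^ ((n:ℝ) - 2) * (C₁ * s) * (1/2) ^ j := by rw [e4]; ring
        _ = ENNReal.ofReal ((2 : ℝ) ^ ((n : ℝ) - 2) * (C₁ * s)) * (ENNReal.ofReal (1/2)) ^ j := by
            rw [ENNReal.ofReal_mul (by positivity), ENNReal.ofReal_pow (by norm_num)]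
    refine (ENNReal.tsum_le_tsum hterm).trans ?_
    rw [ENNReal.tsum_mul_left, ENNReal.tsum_geometric]
    have hgeo : (1 - ENNReal.ofReal (1/2))⁻¹ = 2 := by
      rw [show ENNReal.ofReal (1/2) = 2⁻¹ by
        rw [ENNReal.ofReal_div_of_pos (by norm_num)]; norm_num]
      rw [ENNReal.one_sub_inv_two]
      norm_num
    rw [hgeo]
    rw [← ENNReal.ofReal_ofNat 2, ← ENNReal.ofReal_mul (by positivity)]
    apply ENNReal.ofReal_le_ofReal
    ring_nf
    exact le_rfl
  calc ∫⁻ q in B, k q ∂σ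
      = _ := hsplit
    _ ≤ ENNReal.ofReal ((2 : ℝ) ^ ((n : ℝ) - 2) * 2 * (C₁ * s)) + ENNReal.ofReal (C₁ * s) :=
        add_le_add hnear hfar
    _ = ENNReal.ofReal (((2 : ℝ) ^ ((n : ℝ) - 2) * 2 + 1) * (C₁ * s)) := by
        rw [← ENNReal.ofReal_add (by positivity) (by positivity)]
        congr 1; ring

end aux2


/-- There is `A = A(n) > 0` such that: if `σ` has `(n-1)`-growth with
constant `C₁` and `σ(B(z, r/2)) ≥ c₀ r^{n-1}`, then for any finite measure `ω` there is a
point `q ∈ B(z, r/2)` at which the potential of `ω` is at most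
`A (C₁/c₀) ω(ℝⁿ) r^{2-n}`. -/
theorem stmt8 (n : ℕ) (hn : 3 ≤ n) :
    ∃ A : ℝ, 0 < A ∧
      ∀ C₁ c₀ : ℝ, 0 < C₁ → 0 < c₀ →
      ∀ σ : Measure (EuclideanSpace ℝ (Fin n)),
        (∀ (x : EuclideanSpace ℝ (Fin n)) (t : ℝ), 0 < t →
          σ (Metric.ball x t) ≤ ENNReal.ofReal (C₁ * t ^ ((n : ℝ) - 1))) →
      ∀ (z : EuclideanSpace ℝ (Fin n)) (r : ℝ), 0 < r →
        ENNReal.ofReal (c₀ * r ^ ((n : ℝ) - 1)) ≤ σ (Metric.ball z (r / 2)) →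
      ∀ ω : Measure (EuclideanSpace ℝ (Fin n)), IsFiniteMeasure ω →
        ∃ q ∈ Metric.ball z (r / 2),
          (∫⁻ x, (ENNReal.ofReal ‖x - q‖) ^ ((2 : ℝ) - n) ∂ω) ≤
            ENNReal.ofReal (A * (C₁ / c₀) * (ω Set.univ).toReal * r ^ ((2 : ℝ) - n)) := by
  have hn3 : (3:ℝ) ≤ n := by exact_mod_cast hn
  set K : ℝ := (2:ℝ) ^ ((n:ℝ) - 2) * 2 + 1 with hK
  have hKpos : 0 < K := by positivity
  refine ⟨K, hKpos, ?_⟩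
  intro C₁ c₀ hC₁ hc₀ σ hσ z r hr hlow ω hω
  haveI := hω
  have hr2 : 0 < r / 2 := by linarith
  set c : ℝ := (2:ℝ) - n with hc
  by_cases hω0 : ω Set.univ = 0
  · refine ⟨z, mem_ball_self hr2, ?_⟩
    have h0 : ω = 0 := Measure.measure_univ_eq_zero.1 hω0
    simp [h0]
  · have hW : 0 < (ω Set.univ).toReal := ENNReal.toReal_pos hω0 (measure_ne_top ω _)
    set W := (ω Set.univ).toReal with hWdef
    by_contra hcon
    push_neg at hcon
    set B := Metric.ball z (r / 2) with hBdef
    set M := ENNReal.ofReal (K * (C₁ / c₀) * W * r ^ c) with hM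
    have hMle : ∀ q ∈ B, M ≤ ∫⁻ x, (ENNReal.ofReal ‖x - q‖) ^ c ∂ω :=
      fun q hq => (hcon q hq).le
    have hkm : Measurable (Function.uncurry
        fun q x : EuclideanSpace ℝ (Fin n) => (ENNReal.ofReal ‖x - q‖) ^ c) :=
      (kernel_meas c).comp measurable_swap
    have hσB_fin : σ B ≤ ENNReal.ofReal (C₁ * (r/2) ^ ((n:ℝ) - 1)) := hσ z (r/2) hr2
    haveI : IsFiniteMeasure (σ.restrict B) :=
      ⟨by rw [Measure.restrict_apply_univ]; exact hσB_fin.trans_lt ENNReal.ofReal_lt_top⟩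
    -- lower bound for the double integral
    have hlow2 : M * ENNReal.ofReal (c₀ * r ^ ((n:ℝ) - 1)) ≤
        ∫⁻ q in B, ∫⁻ x, (ENNReal.ofReal ‖x - q‖) ^ c ∂ω ∂σ := by
      calc M * ENNReal.ofReal (c₀ * r ^ ((n:ℝ) - 1)) ≤ M * σ B := mul_le_mul_right hlow _
        _ = ∫⁻ _ in B, M ∂σ := (setLIntegral_const _ _).symm
        _ ≤ ∫⁻ q in B, ∫⁻ x, (ENNReal.ofReal ‖x - q‖) ^ c ∂ω ∂σ :=
            setLIntegral_mono (Measurable.lintegral_prod_right hkm) hMle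
    -- Fubini
    have hswap : ∫⁻ q in B, (∫⁻ x, (ENNReal.ofReal ‖x - q‖) ^ c ∂ω) ∂σ =
        ∫⁻ x, ∫⁻ q in B, (ENNReal.ofReal ‖x - q‖) ^ c ∂σ ∂ω :=
      lintegral_lintegral_swap hkm.aemeasurable
    -- upper bound
    have hup : ∀ x, ∫⁻ q in B, (ENNReal.ofReal ‖x - q‖) ^ c ∂σ ≤
        ENNReal.ofReal (K * (C₁ * (r/2))) :=
      fun x => inner_est n hn C₁ hC₁ σ hσ x (r/2) hr2 B hσB_fin
    have hup2 : ∫⁻ x, (∫⁻ q in B, (ENNReal.ofReal ‖x - q‖) ^ c ∂σ) ∂ω ≤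
        ENNReal.ofReal (K * (C₁ * (r/2)) * W) := by
      calc ∫⁻ x, (∫⁻ q in B, (ENNReal.ofReal ‖x - q‖) ^ c ∂σ) ∂ω
          ≤ ∫⁻ _, ENNReal.ofReal (K * (C₁ * (r/2))) ∂ω := lintegral_mono hup
        _ = ENNReal.ofReal (K * (C₁ * (r/2))) * ω Set.univ := lintegral_const _
        _ = ENNReal.ofReal (K * (C₁ * (r/2))) * ENNReal.ofReal W := by
            rw [hWdef, ENNReal.ofReal_toReal (measure_ne_top ω _)]
        _ = ENNReal.ofReal (K * (C₁ * (r/2)) * W) :=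
            (ENNReal.ofReal_mul (by positivity)).symm
    -- combine
    have final : ENNReal.ofReal (K * (C₁ / c₀) * W * r ^ c * (c₀ * r ^ ((n:ℝ) - 1))) ≤
        ENNReal.ofReal (K * (C₁ * (r/2)) * W) := by
      rw [ENNReal.ofReal_mul (by positivity)]
      exact (hlow2.trans_eq hswap).trans hup2
    rw [ENNReal.ofReal_le_ofReal_iff (by positivity)] at final
    have e : r ^ c * r ^ ((n:ℝ) - 1) = r := by
      rw [← Real.rpow_add hr, show c + ((n:ℝ) - 1) = 1 by rw [hc]; ring, Real.rpow_one]
    have e2 : K * (C₁ / c₀) * W * r ^ c * (c₀ * r ^ ((n:ℝ) - 1)) = K * C₁ * W * r := by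
      have hdc : C₁ / c₀ * c₀ = C₁ := div_mul_cancel₀ _ hc₀.ne'
      calc K * (C₁ / c₀) * W * r ^ c * (c₀ * r ^ ((n:ℝ) - 1))
          = K * (C₁ / c₀ * c₀) * W * (r ^ c * r ^ ((n:ℝ) - 1)) := by ring
        _ = K * C₁ * W * r := by rw [hdc, e]
    rw [e2] at final
    nlinarith [mul_pos (mul_pos (mul_pos hKpos hC₁) hW) hr]
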